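/- Let S be a sequence over F_q with generating function G(x), let N ≥ 2 with G(x) ≢ 0 mod x^N, and let Σ_{ℓ=t_N}^{L_N} c_ℓ s_{i+ℓ} = 0 (0 ≤ i ≤ N−L_N−1) be a shortest linear recurrence for the first N terms, with c_{L_N} = 1 and c_{t_N} ≠ 0. Then E_N(S) ≤ L_N(S) + max{−1, −t_N + 1}; in particular E_N(S) ≤ L_N(S) + 1. -/

import Mathlib

/-- The `N`-th linear complexity of a sequence `s` over a field: the length of a
shortest linear recurrence satisfied by the first `N` terms. -/
noncomputable def linComplexityN {F : Type*} [Field F] (s : ℕ → F) (N : ℕ) : ℕ :=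
  sInf {L | ∃ c : Fin L → F, ∀ i, i + L < N →
    s (i + L) + ∑ ℓ : Fin L, c ℓ * s (i + ℓ.1) = 0}

open Classical in
/-- The `N`-th expansion complexity of a sequence `s` over a field: `0` if the first
`N` terms vanish, otherwise the least total degree of a nonzero bivariate polynomial
`h(x,y)` with `h(x, G(x)) ≡ 0 mod x^N`, where `G` is the generating function of `s`. -/
noncomputable def expComplexityN {F : Type*} [Field F] (s : ℕ → F) (N : ℕ) : ℕ :=
  if ∀ i < N, s i = 0 then 0 else
  sInf {d | ∃ h : MvPolynomial (Fin 2) F, h ≠ 0 ∧ h.totalDegree = d ∧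
    (PowerSeries.X : PowerSeries F) ^ N ∣
      MvPolynomial.aeval ![(PowerSeries.X : PowerSeries F), PowerSeries.mk s] h}

theorem expComplexityN_upper_bound_aperiodic {F : Type*} [Field F] [Fintype F]
    (s : ℕ → F) (N : ℕ) (hN : 2 ≤ N)
    (hG : ¬ (PowerSeries.X : PowerSeries F) ^ N ∣ PowerSeries.mk s)
    (L t : ℕ) (hL : linComplexityN s N = L) (htL : t ≤ L)
    (c : ℕ → F) (hcL : c L = 1) (hct : c t ≠ 0) (hct' : ∀ ℓ < t, c ℓ = 0)
    (hrec : ∀ i, i + L < N → ∑ ℓ ∈ Finset.range (L + 1), c ℓ * s (i + ℓ) = 0)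
    (hmin : ∀ L' < L, ¬ ∃ c' : Fin L' → F, ∀ i, i + L' < N →
      s (i + L') + ∑ ℓ : Fin L', c' ℓ * s (i + ℓ.1) = 0) :
    expComplexityN s N ≤ L + 1 - min 2 t ∧ expComplexityN s N ≤ L + 1 := by
  classical
  set A : MvPolynomial (Fin 2) F :=
    ∑ ℓ ∈ Finset.range (L+1), MvPolynomial.C (c ℓ) * MvPolynomial.X 0 ^ (L - ℓ) with hA
  set gc : ℕ → F := fun n =>
    ∑ ℓ ∈ Finset.range (L+1), if L - ℓ ≤ n then c ℓ * s (n - (L - ℓ)) else 0 with hgc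
  set G : MvPolynomial (Fin 2) F :=
    ∑ n ∈ Finset.range L, MvPolynomial.C (gc n) * MvPolynomial.X 0 ^ n with hGdef
  set h : MvPolynomial (Fin 2) F := A * MvPolynomial.X 1 - G with hh
  -- coefficient of the aeval of A * X 1
  have key : ∀ n : ℕ, (PowerSeries.coeff (R := F) n)
      (MvPolynomial.aeval ![(PowerSeries.X : PowerSeries F), PowerSeries.mk s]
        (A * MvPolynomial.X 1))
      = ∑ ℓ ∈ Finset.range (L+1), if L - ℓ ≤ n then c ℓ * s (n - (L - ℓ)) else 0 := by
    intro n
    rw [map_mul, hA, map_sum]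
    simp only [map_mul, map_pow, MvPolynomial.aeval_C, MvPolynomial.aeval_X,
      Matrix.cons_val_zero, Matrix.cons_val_one, Matrix.head_cons]
    rw [Finset.sum_mul, map_sum]
    refine Finset.sum_congr rfl fun ℓ hℓ => ?_
    rw [mul_assoc, ← PowerSeries.C_eq_algebraMap, PowerSeries.coeff_C_mul,
      PowerSeries.coeff_X_pow_mul']
    simp [PowerSeries.coeff_mk, mul_ite]
  have keyG : ∀ n : ℕ, (PowerSeries.coeff (R := F) n)
      (MvPolynomial.aeval ![(PowerSeries.X : PowerSeries F), PowerSeries.mk s] G)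
      = if n ∈ Finset.range L then gc n else 0 := by
    intro n
    rw [hGdef, map_sum, map_sum]
    rw [← Finset.sum_ite_eq (Finset.range L) n gc]
    refine Finset.sum_congr rfl fun m hm => ?_
    rw [map_mul, map_pow, MvPolynomial.aeval_C, MvPolynomial.aeval_X,
      Matrix.cons_val_zero, ← PowerSeries.C_eq_algebraMap, PowerSeries.coeff_C_mul,
      PowerSeries.coeff_X_pow]
    simp [eq_comm]
  -- divisibility
  have hdvd : (PowerSeries.X : PowerSeries F) ^ N ∣
      MvPolynomial.aeval ![(PowerSeries.X : PowerSeries F), PowerSeries.mk s] h := by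
    rw [PowerSeries.X_pow_dvd_iff]
    intro m hm
    rw [hh, map_sub, map_sub, key, keyG]
    by_cases hmL : m < L
    · rw [if_pos (Finset.mem_range.mpr hmL), hgc, sub_self]
    · rw [if_neg (by simpa using hmL), sub_zero]
      have h0 := hrec (m - L) (by omega)
      rw [← h0]
      refine Finset.sum_congr rfl fun ℓ hℓ => ?_
      have hℓ' : ℓ ≤ L := Nat.lt_succ_iff.mp (Finset.mem_range.mp hℓ)
      rw [if_pos (by omega), show m - (L - ℓ) = m - L + ℓ from by omega]
  -- nonzeroness
  have hcoeff : MvPolynomial.coeff (Finsupp.single 0 (L - t) + Finsupp.single 1 1) h = c t := by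
    rw [hh, MvPolynomial.coeff_sub, MvPolynomial.coeff_mul_X]
    have h1 : MvPolynomial.coeff (Finsupp.single 0 (L - t)) A = c t := by
      rw [hA, MvPolynomial.coeff_sum]
      have : ∀ ℓ ∈ Finset.range (L+1),
          MvPolynomial.coeff (Finsupp.single 0 (L - t))
            (MvPolynomial.C (c ℓ) * MvPolynomial.X 0 ^ (L - ℓ) : MvPolynomial (Fin 2) F)
          = if ℓ = t then c ℓ else 0 := by
        intro ℓ hℓ
        have hℓ' : ℓ ≤ L := Nat.lt_succ_iff.mp (Finset.mem_range.mp hℓ)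
        rw [MvPolynomial.coeff_C_mul, MvPolynomial.coeff_X_pow]
        by_cases he : ℓ = t
        · subst he
          simp
        · rw [if_neg, mul_zero, if_neg he]
          intro hs
          have := DFunLike.congr_fun hs (0 : Fin 2)
          simp [Finsupp.single_apply] at this
          omega
      rw [Finset.sum_congr rfl this, Finset.sum_ite_eq' (Finset.range (L+1)) t c,
        if_pos (Finset.mem_range.mpr (by omega))]
    have h2 : MvPolynomial.coeff (Finsupp.single 0 (L - t) + Finsupp.single 1 1) G = 0 := by
      rw [hGdef, MvPolynomial.coeff_sum]
      refine Finset.sum_eq_zero fun n hn => ?_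
      rw [MvPolynomial.coeff_C_mul, MvPolynomial.coeff_X_pow, if_neg, mul_zero]
      intro hs
      have := DFunLike.congr_fun hs (1 : Fin 2)
      simp [Finsupp.single_apply] at this
    rw [h1, h2, sub_zero]
  have hne : h ≠ 0 := by
    intro h0
    rw [h0, MvPolynomial.coeff_zero] at hcoeff
    exact hct hcoeff.symm
  -- total degree bounds
  have hdegA : A.totalDegree ≤ L - t := by
    rw [hA]
    refine (MvPolynomial.totalDegree_finset_sum _ _).trans (Finset.sup_le fun ℓ hℓ => ?_)
    have hℓ' : ℓ ≤ L := Nat.lt_succ_iff.mp (Finset.mem_range.mp hℓ)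
    by_cases hlt : ℓ < t
    · rw [hct' ℓ hlt]
      simp
    · refine (MvPolynomial.totalDegree_mul _ _).trans ?_
      rw [MvPolynomial.totalDegree_C, MvPolynomial.totalDegree_X_pow]
      omega
  have hdegG : G.totalDegree ≤ L - 1 := by
    rw [hGdef]
    refine (MvPolynomial.totalDegree_finset_sum _ _).trans (Finset.sup_le fun n hn => ?_)
    have hn' : n < L := Finset.mem_range.mp hn
    refine (MvPolynomial.totalDegree_mul _ _).trans ?_
    rw [MvPolynomial.totalDegree_C, MvPolynomial.totalDegree_X_pow]
    omega
  have hdegH : h.totalDegree ≤ L + 1 - min 2 t := by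
    refine (MvPolynomial.totalDegree_sub _ _).trans (max_le ?_ ?_)
    · refine (MvPolynomial.totalDegree_mul _ _).trans ?_
      have := MvPolynomial.totalDegree_X (1 : Fin 2) (R := F)
      omega
    · omega
  -- conclusion
  have hGne : ¬ ∀ i < N, s i = 0 := by
    intro hall
    refine hG ?_
    rw [PowerSeries.X_pow_dvd_iff]
    intro m hm
    simpa using hall m hm
  have hEle : expComplexityN s N ≤ h.totalDegree := by
    rw [expComplexityN, if_neg hGne]
    exact Nat.sInf_le ⟨h, hne, rfl, hdvd⟩
  exact ⟨hEle.trans hdegH, hEle.trans (hdegH.trans (by omega))⟩
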